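/- Let E be a Frobenius exact category. Then MMor_k(E) is a Frobenius exact category: it has enough projectives and enough injectives, and its projective and injective objects coincide. -/

import Mathlib

open CategoryTheory Limits

universe v u

/-- An exact structure (in the sense of Quillen/Bühler) on an additive category `E`:
a class of kernel–cokernel pairs (`ses f g` meaning `X ↣ Y ↠ Z` is an admissible short
exact sequence), closed under isomorphism, such that admissible monomorphisms (resp.
epimorphisms) contain identities, are closed under composition, and are stable under
pushout (resp. pullback). -/
structure ExactStructure (E : Type u) [Category.{v} E] [Preadditive E] [HasZeroObject E] where
  ses : ∀ ⦃X Y Z : E⦄, (X ⟶ Y) → (Y ⟶ Z) → Prop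
  comp_zero : ∀ {X Y Z : E} {f : X ⟶ Y} {g : Y ⟶ Z}, ses f g → f ≫ g = 0
  isKernel : ∀ {X Y Z : E} {f : X ⟶ Y} {g : Y ⟶ Z} (h : ses f g),
      Nonempty (IsLimit (KernelFork.ofι f (comp_zero h)))
  isCokernel : ∀ {X Y Z : E} {f : X ⟶ Y} {g : Y ⟶ Z} (h : ses f g),
      Nonempty (IsColimit (CokernelCofork.ofπ g (comp_zero h)))
  iso_closed : ∀ {X Y Z X' Y' Z' : E} {f : X ⟶ Y} {g : Y ⟶ Z}
      (eX : X ≅ X') (eY : Y ≅ Y') (eZ : Z ≅ Z') {f' : X' ⟶ Y'} {g' : Y' ⟶ Z'},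
      f ≫ eY.hom = eX.hom ≫ f' → g ≫ eZ.hom = eY.hom ≫ g' → ses f g → ses f' g'
  id_mono : ∀ X : E, ∃ (Z : E) (g : X ⟶ Z), ses (𝟙 X) g
  id_epi : ∀ X : E, ∃ (W : E) (f : W ⟶ X), ses f (𝟙 X)
  mono_comp : ∀ {X Y Z : E} {f : X ⟶ Y} {g : Y ⟶ Z},
      (∃ (W : E) (h : Y ⟶ W), ses f h) → (∃ (W : E) (h : Z ⟶ W), ses g h) →
      ∃ (W : E) (h : Z ⟶ W), ses (f ≫ g) h
  epi_comp : ∀ {X Y Z : E} {f : X ⟶ Y} {g : Y ⟶ Z},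
      (∃ (W : E) (h : W ⟶ X), ses h f) → (∃ (W : E) (h : W ⟶ Y), ses h g) →
      ∃ (W : E) (h : W ⟶ X), ses h (f ≫ g)
  mono_pushout : ∀ {X Y Z : E} (f : X ⟶ Y) (t : X ⟶ Z),
      (∃ (W : E) (g : Y ⟶ W), ses f g) →
      ∃ (P : E) (f' : Z ⟶ P) (t' : Y ⟶ P), IsPushout t f f' t' ∧
        ∃ (W : E) (g : P ⟶ W), ses f' g
  epi_pullback : ∀ {X Y Z : E} (g : Y ⟶ X) (t : Z ⟶ X),
      (∃ (W : E) (f : W ⟶ Y), ses f g) →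
      ∃ (P : E) (g' : P ⟶ Z) (t' : P ⟶ Y), IsPullback g' t' t g ∧
        ∃ (W : E) (f : W ⟶ P), ses f g'

namespace ExactStructure

variable {E : Type u} [Category.{v} E] [Preadditive E] [HasZeroObject E]
variable (S : ExactStructure E)

/-- `f` is an admissible monomorphism. -/
def AdmMono {X Y : E} (f : X ⟶ Y) : Prop := ∃ (Z : E) (g : Y ⟶ Z), S.ses f g

/-- `g` is an admissible epimorphism. -/
def AdmEpi {Y Z : E} (g : Y ⟶ Z) : Prop := ∃ (X : E) (f : X ⟶ Y), S.ses f g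

/-- An object of `E` is injective (w.r.t. the exact structure). -/
def EInjective (I : E) : Prop :=
  ∀ ⦃X Y : E⦄ (f : X ⟶ Y), S.AdmMono f → ∀ u : X ⟶ I, ∃ v : Y ⟶ I, f ≫ v = u

/-- An object of `E` is projective (w.r.t. the exact structure). -/
def EProjective (P : E) : Prop :=
  ∀ ⦃Y Z : E⦄ (g : Y ⟶ Z), S.AdmEpi g → ∀ u : P ⟶ Z, ∃ v : P ⟶ Y, v ≫ g = u

/-- An object of the monomorphism category `MMor_k(E)`: a diagram of `k` composable
admissible monomorphisms in `E`. -/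
structure MMorObj (k : ℕ) where
  obj : Fin (k + 1) → E
  map : ∀ i : Fin k, obj i.castSucc ⟶ obj i.succ
  adm : ∀ i, S.AdmMono (map i)

/-- A morphism in the monomorphism category `MMor_k(E)`. -/
structure MMorHom {k : ℕ} (X Y : S.MMorObj k) where
  app : ∀ i, X.obj i ⟶ Y.obj i
  comm : ∀ i : Fin k, X.map i ≫ app i.succ = app i.castSucc ≫ Y.map i

variable {S}

/-- A componentwise admissible short exact sequence in `MMor_k(E)`. -/
def MMorSes {k : ℕ} {X Y Z : S.MMorObj k} (f : S.MMorHom X Y) (g : S.MMorHom Y Z) : Prop :=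
  ∀ i, S.ses (f.app i) (g.app i)

/-- Admissible monomorphisms of `MMor_k(E)`. -/
def MMorAdmMono {k : ℕ} {X Y : S.MMorObj k} (f : S.MMorHom X Y) : Prop :=
  ∃ (Z : S.MMorObj k) (g : S.MMorHom Y Z), MMorSes f g

/-- Admissible epimorphisms of `MMor_k(E)`. -/
def MMorAdmEpi {k : ℕ} {Y Z : S.MMorObj k} (g : S.MMorHom Y Z) : Prop :=
  ∃ (X : S.MMorObj k) (f : S.MMorHom X Y), MMorSes f g

/-- Injective objects of the exact category `MMor_k(E)`. -/
def MMorInjective {k : ℕ} (I : S.MMorObj k) : Prop :=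
  ∀ ⦃X Y : S.MMorObj k⦄ (f : S.MMorHom X Y), MMorAdmMono f →
    ∀ u : S.MMorHom X I, ∃ v : S.MMorHom Y I, ∀ i, f.app i ≫ v.app i = u.app i

/-- Projective objects of the exact category `MMor_k(E)`. -/
def MMorProjective {k : ℕ} (P : S.MMorObj k) : Prop :=
  ∀ ⦃Y Z : S.MMorObj k⦄ (g : S.MMorHom Y Z), MMorAdmEpi g →
    ∀ u : S.MMorHom P Z, ∃ v : S.MMorHom P Y, ∀ i, v.app i ≫ g.app i = u.app i

end ExactStructure
namespace ExactStructure

open ZeroObject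

variable {E : Type u} [Category.{v} E] [Preadditive E] [HasZeroObject E]
variable {S : ExactStructure E}

/-! ### Basic consequences of the axioms -/

lemma ses_mono {X Y Z : E} {f : X ⟶ Y} {g : Y ⟶ Z} (h : S.ses f g) : Mono f := by
  obtain ⟨hk⟩ := S.isKernel h
  constructor
  intro T a b hab
  exact Fork.IsLimit.hom_ext hk (by simpa using hab)

lemma ses_epi {X Y Z : E} {f : X ⟶ Y} {g : Y ⟶ Z} (h : S.ses f g) : Epi g := by
  obtain ⟨hc⟩ := S.isCokernel h
  constructor
  intro T a b hab
  exact Cofork.IsColimit.hom_ext hc (by simpa using hab)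

/-- Replace the cokernel part of a short exact sequence by any other cokernel. -/
lemma ses_of_isCokernel {X Y Z Z' : E} {f : X ⟶ Y} {g : Y ⟶ Z} (h : S.ses f g)
    {g' : Y ⟶ Z'} (w : f ≫ g' = 0) (hc : IsColimit (CokernelCofork.ofπ g' w)) :
    S.ses f g' := by
  obtain ⟨hg⟩ := S.isCokernel h
  refine S.iso_closed (Iso.refl _) (Iso.refl _) (hg.coconePointUniqueUpToIso hc) ?_ ?_ h
  · simp
  · simpa using (hg.comp_coconePointUniqueUpToIso_hom hc WalkingParallelPair.one)

/-- Replace the kernel part of a short exact sequence by any other kernel. -/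
lemma ses_of_isKernel {X X' Y Z : E} {f : X ⟶ Y} {g : Y ⟶ Z} (h : S.ses f g)
    {f' : X' ⟶ Y} (w : f' ≫ g = 0) (hl : IsLimit (KernelFork.ofι f' w)) :
    S.ses f' g := by
  obtain ⟨hf⟩ := S.isKernel h
  refine S.iso_closed (hf.conePointUniqueUpToIso hl) (Iso.refl _) (Iso.refl _) ?_ ?_ h
  · simpa using (hf.conePointUniqueUpToIso_hom_comp hl WalkingParallelPair.zero).symm
  · simp

lemma ses_zero_initial (Y : E) : S.ses (0 : (0 : E) ⟶ Y) (𝟙 Y) := by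
  obtain ⟨W, f, h⟩ := S.id_epi Y
  refine ses_of_isKernel h (by simp) ?_
  refine KernelFork.IsLimit.ofι _ _ (fun g' eq' => 0) (fun g' eq' => ?_) (fun g' eq' m hm => ?_)
  · have hg' : g' = 0 := by simpa using eq'
    simp [hg']
  · exact (HasZeroObject.zeroIsTerminal).hom_ext m 0

noncomputable def binaryCofan_isColimit_of_isPushout {X Y P : E} {f' : X ⟶ P} {t' : Y ⟶ P}
    (hpo : IsPushout (0 : (0 : E) ⟶ X) (0 : (0 : E) ⟶ Y) f' t') :
    IsColimit (BinaryCofan.mk f' t') := by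
  refine BinaryCofan.isColimitMk (fun s => hpo.desc s.inl s.inr (Limits.zero_comp.trans Limits.zero_comp.symm)) ?_ ?_ ?_
  · intro s; exact hpo.inl_desc _ _ _
  · intro s; exact hpo.inr_desc _ _ _
  · intro s m h1 h2
    refine hpo.hom_ext ?_ ?_
    · exact h1.trans (hpo.inl_desc _ _ _).symm
    · exact h2.trans (hpo.inr_desc _ _ _).symm

lemma hasBinaryBiproducts (S : ExactStructure E) : HasBinaryBiproducts E := by
  have h : ∀ X Y : E, HasColimit (pair X Y) := by
    intro X Y
    obtain ⟨P, f', t', hpo, _⟩ :=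
      S.mono_pushout (0 : (0 : E) ⟶ Y) (0 : (0 : E) ⟶ X) ⟨_, _, S.ses_zero_initial Y⟩
    exact HasColimit.mk ⟨_, binaryCofan_isColimit_of_isPushout hpo⟩
  have : HasBinaryCoproducts E := ⟨fun F => hasColimit_of_iso (diagramIsoPair F)⟩
  exact HasBinaryBiproducts.of_hasBinaryCoproducts

section Biprod

variable [HasBinaryBiproducts E]

/-- `snd : X ⊞ Y ⟶ Y` is a cokernel of `inl`. -/
noncomputable def cokernelSndIsColimit (X Y : E) :
    IsColimit (CokernelCofork.ofπ (f := (biprod.inl : X ⟶ X ⊞ Y)) biprod.snd (by simp)) := by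
  refine CokernelCofork.IsColimit.ofπ _ _ (fun g' eq' => biprod.inr ≫ g')
    (fun g' eq' => ?_) (fun g' eq' m hm => ?_)
  · conv_rhs => rw [← Category.id_comp g', ← biprod.total, Preadditive.add_comp,
      Category.assoc, Category.assoc, eq', Limits.comp_zero, zero_add]
  · rw [← hm, ← Category.assoc, biprod.inr_snd, Category.id_comp]

lemma ses_inl_snd (S : ExactStructure E) (X Y : E) :
    S.ses (biprod.inl : X ⟶ X ⊞ Y) (biprod.snd : X ⊞ Y ⟶ Y) := by
  obtain ⟨P, f', t', hpo, W, g, hses⟩ :=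
    S.mono_pushout (0 : (0 : E) ⟶ Y) (0 : (0 : E) ⟶ X) ⟨_, _, S.ses_zero_initial Y⟩
  have hc : IsColimit (BinaryCofan.mk f' t') := binaryCofan_isColimit_of_isPushout hpo
  have hc2 : IsColimit (BinaryCofan.mk (biprod.inl : X ⟶ X ⊞ Y) biprod.inr) :=
    BinaryBiproduct.isColimit X Y
  have h1 : S.ses (biprod.inl : X ⟶ X ⊞ Y) ((hc.coconePointUniqueUpToIso hc2).inv ≫ g) := by
    refine S.iso_closed (Iso.refl _) (hc.coconePointUniqueUpToIso hc2) (Iso.refl _) ?_ (by exact (Category.comp_id _).trans (Iso.hom_inv_id_assoc _ _).symm) hses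
    exact (hc.comp_coconePointUniqueUpToIso_hom hc2 ⟨WalkingPair.left⟩).trans (Category.id_comp _).symm
  exact ses_of_isCokernel h1 (by simp) (cokernelSndIsColimit X Y)

end Biprod

end ExactStructure

namespace ExactStructure

open ZeroObject

variable {E : Type u} [Category.{v} E] [Preadditive E] [HasZeroObject E]
variable {S : ExactStructure E}

/-- Two pushouts of the same span: admissible monicity transports. -/
lemma admMono_of_isPushout_isPushout {X Y Z P Q : E} {t : X ⟶ Z} {f : X ⟶ Y}
    {f' : Z ⟶ P} {t' : Y ⟶ P} {f'' : Z ⟶ Q} {t'' : Y ⟶ Q}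
    (h1 : IsPushout t f f' t') (h2 : IsPushout t f f'' t'')
    (h : S.AdmMono f') : S.AdmMono f'' := by
  obtain ⟨W, g, hses⟩ := h
  have he : f' ≫ (h1.isColimit.coconePointUniqueUpToIso h2.isColimit).hom = f'' := by
    exact h1.isColimit.comp_coconePointUniqueUpToIso_hom h2.isColimit WalkingSpan.left
  exact ⟨W, (h1.isColimit.coconePointUniqueUpToIso h2.isColimit).inv ≫ g,
    S.iso_closed (Iso.refl _) (h1.isColimit.coconePointUniqueUpToIso h2.isColimit) (Iso.refl _)
      (by exact he.trans (Category.id_comp _).symm) (by exact (Category.comp_id _).trans (Iso.hom_inv_id_assoc _ _).symm) hses⟩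

/-- Two pullbacks of the same cospan: admissible epicity transports. -/
lemma admEpi_of_isPullback_isPullback {X Y Z P Q : E} {g : Y ⟶ X} {t : Z ⟶ X}
    {g' : P ⟶ Z} {t' : P ⟶ Y} {g'' : Q ⟶ Z} {t'' : Q ⟶ Y}
    (h1 : IsPullback g' t' t g) (h2 : IsPullback g'' t'' t g)
    (h : S.AdmEpi g') : S.AdmEpi g'' := by
  obtain ⟨W, f, hses⟩ := h
  have he : (h2.isLimit.conePointUniqueUpToIso h1.isLimit).hom ≫ g' = g'' := by
    exact h2.isLimit.conePointUniqueUpToIso_hom_comp h1.isLimit WalkingCospan.left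
  exact ⟨W, f ≫ (h2.isLimit.conePointUniqueUpToIso h1.isLimit).inv,
    S.iso_closed (Iso.refl _) (h2.isLimit.conePointUniqueUpToIso h1.isLimit).symm (Iso.refl _)
      (by exact (Category.id_comp _).symm) (by exact ((Category.comp_id g').trans (Iso.inv_hom_id_assoc (h2.isLimit.conePointUniqueUpToIso h1.isLimit) g').symm).trans (congrArg (fun x => (h2.isLimit.conePointUniqueUpToIso h1.isLimit).inv ≫ x) he)) hses⟩

section Biprod

variable [HasBinaryBiproducts E]

lemma admMono_inl (S : ExactStructure E) (X Y : E) : S.AdmMono (biprod.inl : X ⟶ X ⊞ Y) :=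
  ⟨Y, biprod.snd, S.ses_inl_snd X Y⟩

/-- `biprod.lift (𝟙 X) g` is an admissible mono. -/
lemma admMono_lift_one {X Z : E} (S : ExactStructure E) (g : X ⟶ Z) :
    S.AdmMono (biprod.lift (𝟙 X) g) := by
  refine ⟨Z, ?_, ?_⟩
  · exact (𝟙 (X ⊞ Z) - biprod.fst ≫ g ≫ biprod.inr) ≫ biprod.snd
  · refine S.iso_closed (Iso.refl X)
      (⟨𝟙 (X ⊞ Z) + biprod.fst ≫ g ≫ biprod.inr, 𝟙 (X ⊞ Z) - biprod.fst ≫ g ≫ biprod.inr,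
        ?_, ?_⟩ : X ⊞ Z ≅ X ⊞ Z) (Iso.refl Z) ?_ ?_ (S.ses_inl_snd X Z)
    · simp [Preadditive.comp_add, Preadditive.add_comp, Preadditive.comp_sub,
        Preadditive.sub_comp, Category.assoc]
    · simp [Preadditive.comp_add, Preadditive.add_comp, Preadditive.comp_sub,
        Preadditive.sub_comp, Category.assoc]
    · apply biprod.hom_ext <;>
        simp [Preadditive.comp_add, Preadditive.add_comp]
    · simp

/-- `f ⊞ 𝟙` of an admissible mono is an admissible mono. -/
lemma admMono_map_one {A B J : E} {f : A ⟶ B} (hf : S.AdmMono f) :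
    S.AdmMono (biprod.map f (𝟙 J)) := by
  obtain ⟨P, f'', t'', hpo, hadm⟩ := S.mono_pushout f (biprod.inl : A ⟶ A ⊞ J) hf
  -- hpo : IsPushout biprod.inl f f'' t''
  have hcan : IsPushout (biprod.inl : A ⟶ A ⊞ J) f (biprod.map f (𝟙 J)) (biprod.inl : B ⟶ B ⊞ J) := by
    refine IsPushout.of_isColimit (c := PushoutCocone.mk (biprod.map f (𝟙 J))
      (biprod.inl : B ⟶ B ⊞ J) (by rw [biprod.inl_map])) ?_
    refine PushoutCocone.IsColimit.mk _ (fun s => biprod.desc s.inr (biprod.inr ≫ s.inl))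
      (fun s => ?_) (fun s => by simp) (fun s m h1 h2 => ?_)
    · apply biprod.hom_ext'
      · rw [← Category.assoc, biprod.inl_map, Category.assoc, biprod.inl_desc, ← s.condition]
      · rw [← Category.assoc, biprod.inr_map, Category.id_comp, biprod.inr_desc]
    · apply biprod.hom_ext'
      · rw [biprod.inl_desc, h2]
      · rw [biprod.inr_desc, ← h1, ← Category.assoc, biprod.inr_map, Category.id_comp]
  exact admMono_of_isPushout_isPushout hpo hcan hadm

end Biprod

end ExactStructure

namespace ExactStructure

open ZeroObject

variable {E : Type u} [Category.{v} E] [Preadditive E] [HasZeroObject E]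
variable {S : ExactStructure E}

section Biprod2

variable [HasBinaryBiproducts E]

/-- A biproduct lift with admissible-mono first component is an admissible mono. -/
lemma admMono_lift {X B J : E} {f : X ⟶ B} (hf : S.AdmMono f) (g : X ⟶ J) :
    S.AdmMono (biprod.lift f g) := by
  have hcomp := S.mono_comp (S.admMono_lift_one g) (admMono_map_one (J := J) hf)
  have : biprod.lift (𝟙 X) g ≫ biprod.map f (𝟙 J) = biprod.lift f g := by
    apply biprod.hom_ext
    · rw [Category.assoc, biprod.map_fst, biprod.lift_fst_assoc, Category.id_comp, biprod.lift_fst]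
    · rw [Category.assoc, biprod.map_snd, biprod.lift_snd_assoc, biprod.lift_snd, Category.comp_id]
  rwa [this] at hcomp

/-- `desc g (𝟙 X)` is an admissible epi. -/
lemma admEpi_desc_one {M X : E} (S : ExactStructure E) (h : M ⟶ X) :
    S.AdmEpi (biprod.desc h (𝟙 X)) := by
  refine ⟨M, ?_, ?_⟩
  · exact biprod.inl ≫ (𝟙 (M ⊞ X) - biprod.fst ≫ h ≫ biprod.inr)
  · refine S.iso_closed (Iso.refl M)
      (⟨𝟙 (M ⊞ X) - biprod.fst ≫ h ≫ biprod.inr, 𝟙 (M ⊞ X) + biprod.fst ≫ h ≫ biprod.inr,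
        ?_, ?_⟩ : M ⊞ X ≅ M ⊞ X) (Iso.refl X) ?_ ?_ (S.ses_inl_snd M X)
    · simp [Preadditive.comp_add, Preadditive.add_comp, Preadditive.comp_sub,
        Preadditive.sub_comp, Category.assoc]
    · simp [Preadditive.comp_add, Preadditive.add_comp, Preadditive.comp_sub,
        Preadditive.sub_comp, Category.assoc]
    · simp only [Iso.refl_hom, Category.id_comp]
    · simp only [Iso.refl_hom, Category.comp_id]
      apply biprod.hom_ext'
      · simp [Preadditive.comp_sub, Preadditive.sub_comp]
      · simp [Preadditive.comp_sub, Preadditive.sub_comp]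

/-- `𝟙 ⊞ π` of an admissible epi is an admissible epi. -/
lemma admEpi_map_one {M G X : E} {π : G ⟶ X} (hπ : S.AdmEpi π) :
    S.AdmEpi (biprod.map (𝟙 M) π) := by
  obtain ⟨P, g'', t'', hpb, hadm⟩ := S.epi_pullback π (biprod.snd : M ⊞ X ⟶ X) hπ
  -- hpb : IsPullback g'' t'' biprod.snd π, g'' : P ⟶ M ⊞ X, t'' : P ⟶ G
  have hcan : IsPullback (biprod.map (𝟙 M) π) (biprod.snd : M ⊞ G ⟶ G)
      (biprod.snd : M ⊞ X ⟶ X) π := by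
    refine IsPullback.of_isLimit (c := PullbackCone.mk (biprod.map (𝟙 M) π)
      (biprod.snd : M ⊞ G ⟶ G) (by rw [biprod.map_snd])) ?_
    refine PullbackCone.IsLimit.mk _ (fun s => biprod.lift (s.fst ≫ biprod.fst) s.snd)
      (fun s => ?_) (fun s => by simp) (fun s m h1 h2 => ?_)
    · apply biprod.hom_ext
      · simp
      · simp [s.condition]
    · apply biprod.hom_ext
      · rw [biprod.lift_fst, ← h1]
        simp
      · rw [biprod.lift_snd, ← h2]
  exact admEpi_of_isPullback_isPullback hpb hcan hadm

/-- A biproduct desc with admissible-epi second component is an admissible epi. -/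
lemma admEpi_desc {M G X : E} (h : M ⟶ X) {π : G ⟶ X} (hπ : S.AdmEpi π) :
    S.AdmEpi (biprod.desc h π) := by
  have hcomp := S.epi_comp (admEpi_map_one (M := M) hπ) (S.admEpi_desc_one h)
  have : biprod.map (𝟙 M) π ≫ biprod.desc h (𝟙 X) = biprod.desc h π := by
    apply biprod.hom_ext'
    · rw [← Category.assoc, biprod.inl_map, Category.assoc, biprod.inl_desc,
        Category.id_comp, biprod.inl_desc]
    · rw [← Category.assoc, biprod.inr_map, Category.assoc, biprod.inr_desc,
        Category.comp_id, biprod.inr_desc]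
  rwa [this] at hcomp

end Biprod2

/-- The pullback of an admissible epi along an admissible mono is an admissible mono;
more precisely `t' : P ⟶ Y` is a kernel of `g ≫ q`. -/
lemma ses_snd_of_isPullback {P X Y Z Q K : E} {g : Y ⟶ X} {t : Z ⟶ X} {g' : P ⟶ Z} {t' : P ⟶ Y}
    (hpb : IsPullback g' t' t g) {κ : K ⟶ Y} (hκ : S.ses κ g) {q : X ⟶ Q} (hq : S.ses t q) :
    S.ses t' (g ≫ q) := by
  obtain ⟨K₂, κ₂, hses₂⟩ := S.epi_comp ⟨_, _, hκ⟩ ⟨_, _, hq⟩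
  obtain ⟨hqk⟩ := S.isKernel hq
  have hmt : Mono t := ses_mono hq
  have w : t' ≫ g ≫ q = 0 := by
    rw [← Category.assoc, ← hpb.w, Category.assoc, S.comp_zero hq, Limits.comp_zero]
  have hlift : ∀ {T : E} (τ : T ⟶ Y), τ ≫ (g ≫ q) = 0 → ∃ l : T ⟶ P, l ≫ t' = τ := by
    intro T τ eq
    obtain ⟨σ, hσ⟩ := KernelFork.IsLimit.lift' hqk (τ ≫ g) (by rwa [← Category.assoc] at eq)
    simp only [Fork.ι_ofι] at hσ
    exact ⟨hpb.lift σ τ hσ, hpb.lift_snd _ _ _⟩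
  refine ses_of_isKernel hses₂ w ?_
  refine KernelFork.IsLimit.ofι _ _
    (fun τ eq => (hlift τ eq).choose)
    (fun τ eq => (hlift τ eq).choose_spec) (fun τ eq m hm => ?_)
  have hm' : m ≫ t' = τ := by simpa using hm
  have h2 := (hlift τ eq).choose_spec
  refine hpb.hom_ext ((cancel_mono t).1 ?_) (by rw [hm', h2])
  rw [Category.assoc, Category.assoc, hpb.w, ← Category.assoc, ← Category.assoc, hm', h2]

/-- The kernel inclusion into the pullback of an admissible epi is an admissible mono
(with the same "cokernel" `g'`). -/
lemma ses_kernel_lift_of_isPullback {P X Y Z K W : E} {g : Y ⟶ X} {t : Z ⟶ X}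
    {g' : P ⟶ Z} {t' : P ⟶ Y}
    (hpb : IsPullback g' t' t g) {f₀ : W ⟶ P} (hf₀ : S.ses f₀ g') {κ : K ⟶ Y} (hκ : S.ses κ g)
    {t₀ : K ⟶ P} (h1 : t₀ ≫ t' = κ) (h2 : t₀ ≫ g' = 0) : S.ses t₀ g' := by
  obtain ⟨hf₀k⟩ := S.isKernel hf₀
  obtain ⟨hκk⟩ := S.isKernel hκ
  -- `f₀ ≫ t'` is a kernel of `g`
  have w : (f₀ ≫ t') ≫ g = 0 := by
    rw [Category.assoc, ← hpb.w, ← Category.assoc, S.comp_zero hf₀, Limits.zero_comp]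
  have hlift : ∀ {T : E} (τ : T ⟶ Y), τ ≫ g = 0 → ∃ l : T ⟶ W, l ≫ (f₀ ≫ t') = τ := by
    intro T τ eq
    obtain ⟨lam, hlam⟩ := KernelFork.IsLimit.lift' hf₀k (hpb.lift 0 τ (by simp [eq]))
      (hpb.lift_fst _ _ _)
    simp only [Fork.ι_ofι] at hlam
    exact ⟨lam, by rw [← Category.assoc, hlam, hpb.lift_snd]⟩
  have hlim : IsLimit (KernelFork.ofι (f₀ ≫ t') w) := by
    refine KernelFork.IsLimit.ofι _ _
      (fun τ eq => (hlift τ eq).choose)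
      (fun τ eq => (hlift τ eq).choose_spec) (fun τ eq m hm => ?_)
    have hm' : m ≫ (f₀ ≫ t') = τ := by simpa using hm
    have hch := (hlift τ eq).choose_spec
    refine Fork.IsLimit.hom_ext hf₀k ?_
    simp only [Fork.ι_ofι]
    refine hpb.hom_ext ?_ ?_
    · rw [Category.assoc, S.comp_zero hf₀, Limits.comp_zero, Category.assoc,
        S.comp_zero hf₀, Limits.comp_zero]
    · simp only [Category.assoc]
      rw [hm', hch]
  -- transport along the iso between the two kernels
  have he : (hκk.conePointUniqueUpToIso hlim).hom ≫ (f₀ ≫ t') = κ := by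
    simpa using hκk.conePointUniqueUpToIso_hom_comp hlim WalkingParallelPair.zero
  have hef : (hκk.conePointUniqueUpToIso hlim).hom ≫ f₀ = t₀ := by
    refine hpb.hom_ext ?_ ?_
    · rw [Category.assoc, S.comp_zero hf₀, Limits.comp_zero, h2]
    · rw [Category.assoc, he, h1]
  refine S.iso_closed (hκk.conePointUniqueUpToIso hlim).symm (Iso.refl _) (Iso.refl _) ?_ (by simp) hf₀
  rw [Iso.refl_hom, Category.comp_id, Iso.symm_hom, Iso.eq_inv_comp, hef]

section InjProj

variable [HasBinaryBiproducts E]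

lemma einjective_biprod {I J : E} (hI : S.EInjective I) (hJ : S.EInjective J) :
    S.EInjective (I ⊞ J) := by
  intro X Y f hf u
  obtain ⟨v1, h1⟩ := hI f hf (u ≫ biprod.fst)
  obtain ⟨v2, h2⟩ := hJ f hf (u ≫ biprod.snd)
  refine ⟨biprod.lift v1 v2, ?_⟩
  apply biprod.hom_ext
  · rw [Category.assoc, biprod.lift_fst, h1]
  · rw [Category.assoc, biprod.lift_snd, h2]

lemma eprojective_biprod {I J : E} (hI : S.EProjective I) (hJ : S.EProjective J) :
    S.EProjective (I ⊞ J) := by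
  intro Y Z g hg u
  obtain ⟨v1, h1⟩ := hI g hg (biprod.inl ≫ u)
  obtain ⟨v2, h2⟩ := hJ g hg (biprod.inr ≫ u)
  refine ⟨biprod.desc v1 v2, ?_⟩
  apply biprod.hom_ext'
  · rw [← Category.assoc, biprod.inl_desc, h1]
  · rw [← Category.assoc, biprod.inr_desc, h2]

end InjProj

end ExactStructure

namespace ExactStructure

variable {E : Type u} [Category.{v} E] [Preadditive E] [HasZeroObject E]
variable {S : ExactStructure E}

/-- An object of `MMor_k(E)` with componentwise projective objects and split structure
maps is projective. -/
lemma mmorProjective_of_split {k : ℕ} {P : S.MMorObj k}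
    (hobj : ∀ i, S.EProjective (P.obj i))
    (hsplit : ∀ j : Fin k, ∃ r, P.map j ≫ r = 𝟙 (P.obj j.castSucc)) :
    MMorProjective P := by
  intro Y Z g hg u
  obtain ⟨X, κ, hses⟩ := hg
  have key : ∀ N : ℕ, ∃ v : ∀ n (hn : n < k + 1), P.obj ⟨n, hn⟩ ⟶ Y.obj ⟨n, hn⟩,
      (∀ n (hn : n < k + 1), n ≤ N → v n hn ≫ g.app ⟨n, hn⟩ = u.app ⟨n, hn⟩) ∧
      (∀ n (hn : n + 1 < k + 1), n + 1 ≤ N →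
        P.map ⟨n, Nat.lt_of_succ_lt_succ hn⟩ ≫ v (n+1) hn
          = v n (Nat.lt_of_succ_lt hn) ≫ Y.map ⟨n, Nat.lt_of_succ_lt_succ hn⟩) := by
    intro N
    induction N with
    | zero =>
      obtain ⟨v0, hv0⟩ := hobj ⟨0, Nat.succ_pos k⟩ (g.app ⟨0, Nat.succ_pos k⟩)
        ⟨_, _, hses ⟨0, Nat.succ_pos k⟩⟩ (u.app ⟨0, Nat.succ_pos k⟩)
      refine ⟨fun n hn => if h : n = 0 then h ▸ v0 else 0,
        fun n hn hn0 => ?_, fun n hn hn0 => by omega⟩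
      beta_reduce
      have hn' : n = 0 := by omega
      subst hn'
      rw [dif_pos rfl]
      exact hv0
    | succ N ih =>
      obtain ⟨v, hv1, hv2⟩ := ih
      by_cases hNk : N + 1 < k + 1
      case neg =>
        exact ⟨v, fun n hn hn0 => hv1 n hn (by omega), fun n hn hn0 => hv2 n hn (by omega)⟩
      case pos =>
        have hN : N < k + 1 := Nat.lt_of_succ_lt hNk
        have hNK : N < k := Nat.lt_of_succ_lt_succ hNk
        obtain ⟨r, hr⟩ := (show ∃ r : P.obj ⟨N+1, hNk⟩ ⟶ P.obj ⟨N, hN⟩,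
          P.map ⟨N, hNK⟩ ≫ r = 𝟙 (P.obj ⟨N, hN⟩) from hsplit ⟨N, hNK⟩)
        let pm : P.obj ⟨N, hN⟩ ⟶ P.obj ⟨N+1, hNk⟩ := P.map ⟨N, hNK⟩
        let ym : Y.obj ⟨N, hN⟩ ⟶ Y.obj ⟨N+1, hNk⟩ := Y.map ⟨N, hNK⟩
        let zm : Z.obj ⟨N, hN⟩ ⟶ Z.obj ⟨N+1, hNk⟩ := Z.map ⟨N, hNK⟩
        have hr' : pm ≫ r = 𝟙 (P.obj ⟨N, hN⟩) := hr
        have h1 : pm ≫ u.app ⟨N+1, hNk⟩ = u.app ⟨N, hN⟩ ≫ zm := u.comm ⟨N, hNK⟩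
        have h2 : ym ≫ g.app ⟨N+1, hNk⟩ = g.app ⟨N, hN⟩ ≫ zm := g.comm ⟨N, hNK⟩
        have hv0 := hv1 N hN (Nat.le_refl N)
        set ub : P.obj ⟨N+1, hNk⟩ ⟶ Z.obj ⟨N+1, hNk⟩ :=
          u.app ⟨N+1, hNk⟩ - r ≫ (v N hN ≫ ym) ≫ g.app ⟨N+1, hNk⟩ with hub
        obtain ⟨w₁, hw₁⟩ := hobj ⟨N+1, hNk⟩ (g.app ⟨N+1, hNk⟩) ⟨_, _, hses ⟨N+1, hNk⟩⟩ ub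
        have hε : (pm ≫ w₁) ≫ g.app ⟨N+1, hNk⟩ = 0 := by
          rw [Category.assoc, hw₁, hub, Preadditive.comp_sub,
            ← Category.assoc pm r, hr', Category.id_comp, h1, Category.assoc,
            h2, ← Category.assoc, hv0, sub_self]
        obtain ⟨hκlim⟩ := S.isKernel (hses ⟨N+1, hNk⟩)
        obtain ⟨εb, hεb⟩ := KernelFork.IsLimit.lift' hκlim (pm ≫ w₁) hε
        simp only [Fork.ι_ofι] at hεb
        set wd : P.obj ⟨N+1, hNk⟩ ⟶ Y.obj ⟨N+1, hNk⟩ :=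
          w₁ - r ≫ εb ≫ κ.app ⟨N+1, hNk⟩ with hwd
        have hmw : pm ≫ wd = 0 := by
          rw [hwd, Preadditive.comp_sub, ← Category.assoc pm r, hr', Category.id_comp,
            hεb, sub_self]
        have hwg : wd ≫ g.app ⟨N+1, hNk⟩ = ub := by
          rw [hwd, Preadditive.sub_comp, hw₁, Category.assoc, Category.assoc,
            S.comp_zero (hses ⟨N+1, hNk⟩), Limits.comp_zero, Limits.comp_zero, sub_zero]
        set v1 : P.obj ⟨N+1, hNk⟩ ⟶ Y.obj ⟨N+1, hNk⟩ := r ≫ (v N hN ≫ ym) + wd with hv1def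
        have hlink : pm ≫ v1 = v N hN ≫ ym := by
          rw [hv1def, Preadditive.comp_add, hmw, add_zero, ← Category.assoc pm r, hr',
            Category.id_comp]
        have hcomp : v1 ≫ g.app ⟨N+1, hNk⟩ = u.app ⟨N+1, hNk⟩ := by
          rw [hv1def, Preadditive.add_comp, hwg, hub, Category.assoc]
          abel
        refine ⟨fun n hn => if h : n = N+1 then h ▸ v1 else v n hn, fun n hn hn0 => ?_,
          fun n hn hn0 => ?_⟩
        · beta_reduce
          by_cases h : n = N+1
          · subst h
            rw [dif_pos rfl]
            exact hcomp
          · rw [dif_neg h]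
            exact hv1 n hn (by omega)
        · beta_reduce
          by_cases h : n + 1 = N+1
          · have h' : n = N := by omega
            subst h'
            rw [dif_pos rfl, dif_neg (by omega)]
            exact hlink
          · rw [dif_neg h, dif_neg (by omega)]
            exact hv2 n hn (by omega)
  obtain ⟨v, hc1, hc2⟩ := key k
  refine ⟨⟨fun i => v i.val i.isLt, fun j => hc2 j.val j.succ.isLt (Nat.lt_succ_iff.mp j.succ.isLt)⟩,
    fun i => hc1 i.val i.isLt (Nat.lt_succ_iff.mp i.isLt)⟩

end ExactStructure

namespace ExactStructure

variable {E : Type u} [Category.{v} E] [Preadditive E] [HasZeroObject E]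
variable {S : ExactStructure E}

/-- An object of `MMor_k(E)` with componentwise injective objects and split structure
maps is injective. -/
lemma mmorInjective_of_split {k : ℕ} {J : S.MMorObj k}
    (hobj : ∀ i, S.EInjective (J.obj i))
    (hsplit : ∀ j : Fin k, ∃ r, J.map j ≫ r = 𝟙 (J.obj j.castSucc)) :
    MMorInjective J := by
  intro A B φ hφ u
  obtain ⟨D, π, hses⟩ := hφ
  have key : ∀ N : ℕ, ∃ v : ∀ n (hn : n < k + 1), B.obj ⟨n, hn⟩ ⟶ J.obj ⟨n, hn⟩,
      (∀ n (hn : n < k + 1), n ≤ N → φ.app ⟨n, hn⟩ ≫ v n hn = u.app ⟨n, hn⟩) ∧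
      (∀ n (hn : n + 1 < k + 1), n + 1 ≤ N →
        B.map ⟨n, Nat.lt_of_succ_lt_succ hn⟩ ≫ v (n+1) hn
          = v n (Nat.lt_of_succ_lt hn) ≫ J.map ⟨n, Nat.lt_of_succ_lt_succ hn⟩) := by
    intro N
    induction N with
    | zero =>
      obtain ⟨v0, hv0⟩ := hobj ⟨0, Nat.succ_pos k⟩ (φ.app ⟨0, Nat.succ_pos k⟩)
        ⟨_, _, hses ⟨0, Nat.succ_pos k⟩⟩ (u.app ⟨0, Nat.succ_pos k⟩)
      refine ⟨fun n hn => if h : n = 0 then h ▸ v0 else 0,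
        fun n hn hn0 => ?_, fun n hn hn0 => by omega⟩
      beta_reduce
      have hn' : n = 0 := by omega
      subst hn'
      rw [dif_pos rfl]
      exact hv0
    | succ N ih =>
      obtain ⟨v, hC, hL⟩ := ih
      by_cases hNk : N + 1 < k + 1
      case neg =>
        exact ⟨v, fun n hn hn0 => hC n hn (by omega), fun n hn hn0 => hL n hn (by omega)⟩
      case pos =>
        have hN : N < k + 1 := Nat.lt_of_succ_lt hNk
        have hNK : N < k := Nat.lt_of_succ_lt_succ hNk
        obtain ⟨r, hr⟩ := (show ∃ r : J.obj ⟨N+1, hNk⟩ ⟶ J.obj ⟨N, hN⟩,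
          J.map ⟨N, hNK⟩ ≫ r = 𝟙 (J.obj ⟨N, hN⟩) from hsplit ⟨N, hNK⟩)
        let am : A.obj ⟨N, hN⟩ ⟶ A.obj ⟨N+1, hNk⟩ := A.map ⟨N, hNK⟩
        let bm : B.obj ⟨N, hN⟩ ⟶ B.obj ⟨N+1, hNk⟩ := B.map ⟨N, hNK⟩
        let dm : D.obj ⟨N, hN⟩ ⟶ D.obj ⟨N+1, hNk⟩ := D.map ⟨N, hNK⟩
        let jm : J.obj ⟨N, hN⟩ ⟶ J.obj ⟨N+1, hNk⟩ := J.map ⟨N, hNK⟩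
        have hr' : jm ≫ r = 𝟙 (J.obj ⟨N, hN⟩) := hr
        have hφc : am ≫ φ.app ⟨N+1, hNk⟩ = φ.app ⟨N, hN⟩ ≫ bm := φ.comm ⟨N, hNK⟩
        have hπc : bm ≫ π.app ⟨N+1, hNk⟩ = π.app ⟨N, hN⟩ ≫ dm := π.comm ⟨N, hNK⟩
        have huc : am ≫ u.app ⟨N+1, hNk⟩ = u.app ⟨N, hN⟩ ≫ jm := u.comm ⟨N, hNK⟩
        have hv0 := hC N hN (Nat.le_refl N)
        obtain ⟨Q, q, hq⟩ := D.adm ⟨N, hNK⟩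
        have hq' : S.ses dm q := hq
        obtain ⟨P', g', t', hpb, W, f₀, hf₀⟩ :=
          S.epi_pullback (π.app ⟨N+1, hNk⟩) dm ⟨_, _, hses ⟨N+1, hNk⟩⟩
        have hst' : S.ses t' (π.app ⟨N+1, hNk⟩ ≫ q) :=
          ses_snd_of_isPullback hpb (hses ⟨N+1, hNk⟩) hq'
        obtain ⟨t₀, ht₀g, ht₀t⟩ : ∃ t₀ : A.obj ⟨N+1, hNk⟩ ⟶ P',
            t₀ ≫ g' = 0 ∧ t₀ ≫ t' = φ.app ⟨N+1, hNk⟩ :=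
          ⟨hpb.lift 0 (φ.app ⟨N+1, hNk⟩)
            (by rw [Limits.zero_comp, S.comp_zero (hses ⟨N+1, hNk⟩)]),
           hpb.lift_fst _ _ _, hpb.lift_snd _ _ _⟩
        have hst₀ : S.ses t₀ g' :=
          ses_kernel_lift_of_isPullback hpb hf₀ (hses ⟨N+1, hNk⟩) ht₀t ht₀g
        obtain ⟨β, hβg, hβt⟩ : ∃ β : B.obj ⟨N, hN⟩ ⟶ P',
            β ≫ g' = π.app ⟨N, hN⟩ ∧ β ≫ t' = bm :=
          ⟨hpb.lift (π.app ⟨N, hN⟩) bm hπc.symm, hpb.lift_fst _ _ _, hpb.lift_snd _ _ _⟩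
        have hφβ : φ.app ⟨N, hN⟩ ≫ β = am ≫ t₀ := by
          refine hpb.hom_ext ?_ ?_
          · rw [Category.assoc, hβg, S.comp_zero (hses ⟨N, hN⟩), Category.assoc, ht₀g,
              Limits.comp_zero]
          · rw [Category.assoc, hβt, Category.assoc, ht₀t, hφc]
        set ut : A.obj ⟨N+1, hNk⟩ ⟶ J.obj ⟨N, hN⟩ := u.app ⟨N+1, hNk⟩ ≫ r with hut
        have haut : am ≫ ut = u.app ⟨N, hN⟩ := by
          rw [hut, ← Category.assoc, huc, Category.assoc, hr', Category.comp_id]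
        obtain ⟨γ₁, hγ₁⟩ := hobj ⟨N, hN⟩ t₀ ⟨_, _, hst₀⟩ ut
        set ε : B.obj ⟨N, hN⟩ ⟶ J.obj ⟨N, hN⟩ := v N hN - β ≫ γ₁ with hεdef
        have hεφ : φ.app ⟨N, hN⟩ ≫ ε = 0 := by
          rw [hεdef, Preadditive.comp_sub, hv0, ← Category.assoc, hφβ, Category.assoc, hγ₁,
            haut, sub_self]
        obtain ⟨hc0⟩ := S.isCokernel (hses ⟨N, hN⟩)
        obtain ⟨εb, hεb⟩ := CokernelCofork.IsColimit.desc' hc0 ε hεφ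
        simp only [Cofork.π_ofπ] at hεb
        obtain ⟨α, hα⟩ := hobj ⟨N, hN⟩ t' ⟨_, _, hst'⟩ (γ₁ + g' ≫ εb)
        have hbα : bm ≫ α = v N hN := by
          rw [← hβt, Category.assoc, hα, Preadditive.comp_add, ← Category.assoc β g', hβg,
            hεb, hεdef]
          abel
        have hφα : φ.app ⟨N+1, hNk⟩ ≫ α = ut := by
          rw [← ht₀t, Category.assoc, hα, Preadditive.comp_add, hγ₁, ← Category.assoc t₀ g',
            ht₀g, Limits.zero_comp, add_zero]
        set us : A.obj ⟨N+1, hNk⟩ ⟶ J.obj ⟨N+1, hNk⟩ := u.app ⟨N+1, hNk⟩ - ut ≫ jm with hus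
        have haus : am ≫ us = 0 := by
          rw [hus, Preadditive.comp_sub, huc, ← Category.assoc am ut, haut, sub_self]
        obtain ⟨β₁, hβ₁⟩ := hobj ⟨N+1, hNk⟩ (φ.app ⟨N+1, hNk⟩) ⟨_, _, hses ⟨N+1, hNk⟩⟩ us
        have hφε₂ : φ.app ⟨N, hN⟩ ≫ (bm ≫ β₁) = 0 := by
          rw [← Category.assoc, ← hφc, Category.assoc, hβ₁, haus]
        obtain ⟨εb₂, hεb₂⟩ := CokernelCofork.IsColimit.desc' hc0 (bm ≫ β₁) hφε₂
        simp only [Cofork.π_ofπ] at hεb₂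
        obtain ⟨ζ, hζ⟩ := hobj ⟨N+1, hNk⟩ dm ⟨_, _, hq'⟩ εb₂
        set δ : B.obj ⟨N+1, hNk⟩ ⟶ J.obj ⟨N+1, hNk⟩ := β₁ - π.app ⟨N+1, hNk⟩ ≫ ζ with hδdef
        have hbδ : bm ≫ δ = 0 := by
          rw [hδdef, Preadditive.comp_sub, ← Category.assoc, hπc, Category.assoc, hζ, hεb₂,
            sub_self]
        have hφδ : φ.app ⟨N+1, hNk⟩ ≫ δ = us := by
          rw [hδdef, Preadditive.comp_sub, hβ₁, ← Category.assoc,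
            S.comp_zero (hses ⟨N+1, hNk⟩), Limits.zero_comp, sub_zero]
        set v1 : B.obj ⟨N+1, hNk⟩ ⟶ J.obj ⟨N+1, hNk⟩ := α ≫ jm + δ with hv1def
        have hlink : bm ≫ v1 = v N hN ≫ jm := by
          rw [hv1def, Preadditive.comp_add, hbδ, add_zero, ← Category.assoc, hbα]
        have hcomp : φ.app ⟨N+1, hNk⟩ ≫ v1 = u.app ⟨N+1, hNk⟩ := by
          rw [hv1def, Preadditive.comp_add, hφδ, ← Category.assoc, hφα, hus]
          abel
        refine ⟨fun n hn => if h : n = N+1 then h ▸ v1 else v n hn, fun n hn hn0 => ?_,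
          fun n hn hn0 => ?_⟩
        · beta_reduce
          by_cases h : n = N+1
          · subst h
            rw [dif_pos rfl]
            exact hcomp
          · rw [dif_neg h]
            exact hC n hn (by omega)
        · beta_reduce
          by_cases h : n + 1 = N+1
          · have h' : n = N := by omega
            subst h'
            rw [dif_pos rfl, dif_neg (by omega)]
            exact hlink
          · rw [dif_neg h, dif_neg (by omega)]
            exact hL n hn (by omega)
  obtain ⟨v, hc1, hc2⟩ := key k
  refine ⟨⟨fun i => v i.val i.isLt, fun j => hc2 j.val j.succ.isLt (Nat.lt_succ_iff.mp j.succ.isLt)⟩,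
    fun i => hc1 i.val i.isLt (Nat.lt_succ_iff.mp i.isLt)⟩

end ExactStructure

namespace ExactStructure

variable {E : Type u} [Category.{v} E] [Preadditive E] [HasZeroObject E]
variable {S : ExactStructure E}

/-- Partial data for the construction of an injective embedding in `MMor_k(E)`. -/
structure InjData (S : ExactStructure E) {k : ℕ} (X : S.MMorObj k) (n : ℕ) (hn : n < k + 1) where
  M : E
  C : E
  f : X.obj ⟨n, hn⟩ ⟶ M
  ψ : M ⟶ C
  hses : S.ses f ψ
  hMinj : S.EInjective M
  hMproj : S.EProjective M

/-- One step of the construction. -/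
structure InjStep (S : ExactStructure E) {k : ℕ} (X : S.MMorObj k) (n : ℕ) (hn : n + 1 < k + 1)
    (prev : InjData S X n (Nat.lt_of_succ_lt hn)) where
  next : InjData S X (n+1) hn
  link : prev.M ⟶ next.M
  clink : prev.C ⟶ next.C
  hlink : S.AdmMono link
  hsplit : ∃ r, link ≫ r = 𝟙 prev.M
  hnat : X.map ⟨n, Nat.lt_of_succ_lt_succ hn⟩ ≫ next.f = prev.f ≫ link
  hψ : link ≫ next.ψ = prev.ψ ≫ clink
  hclink : S.AdmMono clink

lemma ibase_ex {k : ℕ} (X : S.MMorObj k)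
    (hinj : ∀ Y : E, ∃ (I : E) (ι : Y ⟶ I), S.EInjective I ∧ S.AdmMono ι)
    (hfrob : ∀ Y : E, S.EProjective Y ↔ S.EInjective Y) :
    ∃ _ : InjData S X 0 (Nat.succ_pos k), True := by
  obtain ⟨I₀, ι, hIinj, C₀, ψ₀, hses₀⟩ := hinj (X.obj ⟨0, Nat.succ_pos k⟩)
  exact ⟨⟨I₀, C₀, ι, ψ₀, hses₀, hIinj, (hfrob I₀).mpr hIinj⟩, trivial⟩

lemma istep_ex [HasBinaryBiproducts E] {k : ℕ} (X : S.MMorObj k)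
    (hinj : ∀ Y : E, ∃ (I : E) (ι : Y ⟶ I), S.EInjective I ∧ S.AdmMono ι)
    (hfrob : ∀ Y : E, S.EProjective Y ↔ S.EInjective Y)
    (n : ℕ) (hn : n + 1 < k + 1) (prev : InjData S X n (Nat.lt_of_succ_lt hn)) :
    ∃ _ : InjStep S X n hn prev, True := by
  have hnk : n < k := Nat.lt_of_succ_lt_succ hn
  let xm : X.obj ⟨n, Nat.lt_of_succ_lt hn⟩ ⟶ X.obj ⟨n+1, hn⟩ := X.map ⟨n, hnk⟩
  obtain ⟨Qc, cm, hcm⟩ := X.adm ⟨n, hnk⟩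
  have hcm' : S.ses xm cm := hcm
  haveI hecm : Epi cm := ses_epi hcm'
  -- extend `prev.f` along `xm` using injectivity of `prev.M`
  obtain ⟨ft, hft⟩ := prev.hMinj xm ⟨_, _, hcm'⟩ prev.f
  obtain ⟨I', e0, hI'inj, hI'adm⟩ := hinj Qc
  set fn : X.obj ⟨n+1, hn⟩ ⟶ prev.M ⊞ I' := biprod.lift ft (cm ≫ e0) with hfn
  -- the pushout `P` of `prev.f` and `xm`
  obtain ⟨P, m', fb, hpo1, hPadm⟩ := S.mono_pushout xm prev.f ⟨_, _, hcm'⟩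
  -- hpo1 : IsPushout prev.f xm m' fb
  obtain ⟨P₂, fb₂, m₂, hpo2, hfb₂⟩ := S.mono_pushout prev.f xm ⟨_, _, prev.hses⟩
  -- hpo2 : IsPushout xm prev.f fb₂ m₂
  have hfbAdm : S.AdmMono fb := admMono_of_isPushout_isPushout hpo2 hpo1.flip hfb₂
  have hη : xm ≫ (fb - ft ≫ m') = 0 := by
    rw [Preadditive.comp_sub, ← Category.assoc, hft, ← hpo1.w, sub_self]
  obtain ⟨hccm⟩ := S.isCokernel hcm'
  obtain ⟨ξ, hξ⟩ := CokernelCofork.IsColimit.desc' hccm (fb - ft ≫ m') hη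
  simp only [Cofork.π_ofπ] at hξ
  have w1 : prev.f ≫ (biprod.inl : prev.M ⟶ prev.M ⊞ I') = xm ≫ fn := by
    apply biprod.hom_ext
    · rw [Category.assoc, biprod.inl_fst, Category.comp_id, hfn, Category.assoc,
        biprod.lift_fst, hft]
    · rw [Category.assoc, biprod.inl_snd, Limits.comp_zero, hfn, Category.assoc,
        biprod.lift_snd, ← Category.assoc, S.comp_zero hcm', Limits.zero_comp]
  set θ : P ⟶ prev.M ⊞ I' := hpo1.desc biprod.inl fn w1 with hθ
  have hθm : m' ≫ θ = biprod.inl := hpo1.inl_desc _ _ _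
  have hθfb : fb ≫ θ = fn := hpo1.inr_desc _ _ _
  have h5 : cm ≫ e0 ≫ biprod.inr = fn - ft ≫ biprod.inl := by
    apply biprod.hom_ext
    · rw [Category.assoc, Category.assoc, biprod.inr_fst, Limits.comp_zero, Limits.comp_zero,
        Preadditive.sub_comp, hfn, biprod.lift_fst, Category.assoc, biprod.inl_fst,
        Category.comp_id, sub_self]
    · rw [Category.assoc, Category.assoc, biprod.inr_snd, Category.comp_id,
        Preadditive.sub_comp, hfn, biprod.lift_snd, Category.assoc, biprod.inl_snd,
        Limits.comp_zero, sub_zero]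
  -- `θ` is the pushout of `e0` along `ξ`, hence an admissible mono
  have hpoθ : IsPushout ξ e0 θ (biprod.inr : I' ⟶ prev.M ⊞ I') := by
    have hcommθ : ξ ≫ θ = e0 ≫ biprod.inr := by
      rw [← cancel_epi cm, ← Category.assoc, hξ, Preadditive.sub_comp, hθfb, Category.assoc,
        hθm, h5]
    refine IsPushout.of_isColimit (c := PushoutCocone.mk θ biprod.inr hcommθ) ?_
    refine PushoutCocone.IsColimit.mk _ (fun s => biprod.desc (m' ≫ s.inl) s.inr)
      (fun s => ?_) (fun s => by simp) (fun s m h1 h2 => ?_)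
    · refine hpo1.hom_ext ?_ ?_
      · rw [← Category.assoc, hθm, biprod.inl_desc]
      · rw [← Category.assoc, hθfb, hfn, biprod.lift_desc, Category.assoc, ← s.condition,
          ← Category.assoc cm ξ s.inl, hξ]
        simp only [Preadditive.sub_comp, Category.assoc]
        abel
    · apply biprod.hom_ext'
      · rw [biprod.inl_desc, ← hθm, Category.assoc, h1]
      · rw [biprod.inr_desc, h2]
  obtain ⟨P₃, θ₃, t₃, hpo3, hθ₃⟩ := S.mono_pushout e0 ξ hI'adm
  have hθAdm : S.AdmMono θ := admMono_of_isPushout_isPushout hpo3 hpoθ hθ₃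
  have hfnAdm : S.AdmMono fn := by
    have := S.mono_comp hfbAdm hθAdm
    rwa [hθfb] at this
  obtain ⟨Cn, ψn, hsesn⟩ := hfnAdm
  haveI heψn : Epi ψn := ses_epi hsesn
  haveI heψ : Epi prev.ψ := ses_epi prev.hses
  -- the induced map on cokernels
  obtain ⟨hcψ⟩ := S.isCokernel prev.hses
  have hw2 : prev.f ≫ (biprod.inl ≫ ψn) = 0 := by
    rw [← Category.assoc, w1, Category.assoc, S.comp_zero hsesn, Limits.comp_zero]
  obtain ⟨c, hc⟩ := CokernelCofork.IsColimit.desc' hcψ (biprod.inl ≫ ψn) hw2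
  simp only [Cofork.π_ofπ] at hc
  -- `c` is the pushout of `e0` along `-ι̃`
  have hitw : xm ≫ (ft ≫ prev.ψ) = 0 := by
    rw [← Category.assoc, hft, S.comp_zero prev.hses]
  obtain ⟨it, hit⟩ := CokernelCofork.IsColimit.desc' hccm (ft ≫ prev.ψ) hitw
  simp only [Cofork.π_ofπ] at hit
  obtain ⟨hcψn⟩ := S.isCokernel hsesn
  have hdesc : ∀ s : PushoutCocone (-it) e0, fn ≫ biprod.desc (prev.ψ ≫ s.inl) s.inr = 0 := by
    intro s
    have hcond : e0 ≫ s.inr = -(it ≫ s.inl) := by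
      rw [← s.condition, Preadditive.neg_comp]
    rw [hfn, biprod.lift_desc, Category.assoc, hcond, Preadditive.comp_neg,
      ← Category.assoc cm it s.inl, hit, Category.assoc, add_neg_cancel]
  have hpoc : IsPushout (-it) e0 c (biprod.inr ≫ ψn) := by
    have hcommc : (-it) ≫ c = e0 ≫ (biprod.inr ≫ ψn) := by
      rw [← cancel_epi cm]
      calc cm ≫ (-it) ≫ c = -(ft ≫ (prev.ψ ≫ c)) := by
            rw [← Category.assoc, Preadditive.comp_neg, hit, Preadditive.neg_comp,
              Category.assoc]
          _ = (fn - ft ≫ biprod.inl) ≫ ψn := by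
            rw [hc, Preadditive.sub_comp, S.comp_zero hsesn, zero_sub, Category.assoc]
          _ = cm ≫ e0 ≫ (biprod.inr ≫ ψn) := by
            rw [← h5]
            simp only [Category.assoc]
    refine IsPushout.of_isColimit (c := PushoutCocone.mk c (biprod.inr ≫ ψn) hcommc) ?_
    refine PushoutCocone.IsColimit.mk _
      (fun s => (CokernelCofork.IsColimit.desc' hcψn
        (biprod.desc (prev.ψ ≫ s.inl) s.inr) (hdesc s)).1)
      (fun s => ?_) (fun s => ?_) (fun s m h1 h2 => ?_)
    · have hspec := (CokernelCofork.IsColimit.desc' hcψn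
        (biprod.desc (prev.ψ ≫ s.inl) s.inr) (hdesc s)).2
      simp only [Cofork.π_ofπ] at hspec
      rw [← cancel_epi prev.ψ, ← Category.assoc, hc, Category.assoc, hspec, biprod.inl_desc]
    · have hspec := (CokernelCofork.IsColimit.desc' hcψn
        (biprod.desc (prev.ψ ≫ s.inl) s.inr) (hdesc s)).2
      simp only [Cofork.π_ofπ] at hspec
      rw [Category.assoc, hspec, biprod.inr_desc]
    · have hspec := (CokernelCofork.IsColimit.desc' hcψn
        (biprod.desc (prev.ψ ≫ s.inl) s.inr) (hdesc s)).2
      simp only [Cofork.π_ofπ] at hspec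
      rw [← cancel_epi ψn, hspec]
      apply biprod.hom_ext'
      · rw [← Category.assoc, ← hc, Category.assoc, h1, biprod.inl_desc]
      · rw [← Category.assoc, h2, biprod.inr_desc]
  obtain ⟨P₄, c₄, t₄, hpo4, hc₄⟩ := S.mono_pushout e0 (-it) hI'adm
  have hcAdm : S.AdmMono c := admMono_of_isPushout_isPushout hpo4 hpoc hc₄
  exact ⟨⟨⟨prev.M ⊞ I', Cn, fn, ψn, hsesn, einjective_biprod prev.hMinj hI'inj,
    eprojective_biprod prev.hMproj ((hfrob I').mpr hI'inj)⟩,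
    biprod.inl, c, S.admMono_inl _ _, ⟨biprod.fst, biprod.inl_fst⟩, w1.symm, hc.symm, hcAdm⟩,
    trivial⟩

end ExactStructure

namespace ExactStructure

variable {E : Type u} [Category.{v} E] [Preadditive E] [HasZeroObject E]
variable {S : ExactStructure E}

section IChain

variable [HasBinaryBiproducts E] {k : ℕ} (X : S.MMorObj k)
  (hinj : ∀ Y : E, ∃ (I : E) (ι : Y ⟶ I), S.EInjective I ∧ S.AdmMono ι)
  (hfrob : ∀ Y : E, S.EProjective Y ↔ S.EInjective Y)

noncomputable def ichain : ∀ (n : ℕ) (hn : n < k + 1), InjData S X n hn :=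
  Nat.rec (motive := fun n => ∀ hn : n < k + 1, InjData S X n hn)
    (fun _ => (ibase_ex X hinj hfrob).choose)
    (fun n ih hn => (istep_ex X hinj hfrob n hn (ih (Nat.lt_of_succ_lt hn))).choose.next)

noncomputable def istepD (n : ℕ) (hn : n + 1 < k + 1) :
    InjStep S X n hn (ichain X hinj hfrob n (Nat.lt_of_succ_lt hn)) :=
  (istep_ex X hinj hfrob n hn (ichain X hinj hfrob n (Nat.lt_of_succ_lt hn))).choose

include hinj hfrob in
lemma mmor_enough_injectives_aux :
    ∃ (J : S.MMorObj k) (f : S.MMorHom X J),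
      MMorAdmMono f ∧ MMorInjective J ∧ MMorProjective J := by
  refine ⟨⟨fun i => (ichain X hinj hfrob i.val i.isLt).M,
      fun j => (istepD X hinj hfrob j.val (Nat.succ_lt_succ j.isLt)).link,
      fun j => (istepD X hinj hfrob j.val (Nat.succ_lt_succ j.isLt)).hlink⟩,
    ⟨fun i => (ichain X hinj hfrob i.val i.isLt).f,
      fun j => (istepD X hinj hfrob j.val (Nat.succ_lt_succ j.isLt)).hnat⟩,
    ⟨⟨fun i => (ichain X hinj hfrob i.val i.isLt).C,
        fun j => (istepD X hinj hfrob j.val (Nat.succ_lt_succ j.isLt)).clink,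
        fun j => (istepD X hinj hfrob j.val (Nat.succ_lt_succ j.isLt)).hclink⟩,
      ⟨fun i => (ichain X hinj hfrob i.val i.isLt).ψ,
        fun j => (istepD X hinj hfrob j.val (Nat.succ_lt_succ j.isLt)).hψ⟩,
      fun i => (ichain X hinj hfrob i.val i.isLt).hses⟩,
    mmorInjective_of_split (fun i => (ichain X hinj hfrob i.val i.isLt).hMinj)
      (fun j => (istepD X hinj hfrob j.val (Nat.succ_lt_succ j.isLt)).hsplit),
    mmorProjective_of_split (fun i => (ichain X hinj hfrob i.val i.isLt).hMproj)
      (fun j => (istepD X hinj hfrob j.val (Nat.succ_lt_succ j.isLt)).hsplit)⟩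

end IChain

end ExactStructure

namespace ExactStructure

variable {E : Type u} [Category.{v} E] [Preadditive E] [HasZeroObject E]
variable {S : ExactStructure E}

/-- Partial data for the construction of a projective cover in `MMor_k(E)`. -/
structure PData (S : ExactStructure E) {k : ℕ} (X : S.MMorObj k) (n : ℕ) (hn : n < k + 1) where
  M : E
  K : E
  ρ : M ⟶ X.obj ⟨n, hn⟩
  κ : K ⟶ M
  hses : S.ses κ ρ
  hMproj : S.EProjective M
  hMinj : S.EInjective M

/-- One step of the construction. -/
structure PStep (S : ExactStructure E) {k : ℕ} (X : S.MMorObj k) (n : ℕ) (hn : n + 1 < k + 1)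
    (prev : PData S X n (Nat.lt_of_succ_lt hn)) where
  next : PData S X (n+1) hn
  link : prev.M ⟶ next.M
  klink : prev.K ⟶ next.K
  hlink : S.AdmMono link
  hsplit : ∃ r, link ≫ r = 𝟙 prev.M
  hklink : S.AdmMono klink
  hκ : klink ≫ next.κ = prev.κ ≫ link
  hρ : link ≫ next.ρ = prev.ρ ≫ X.map ⟨n, Nat.lt_of_succ_lt_succ hn⟩

lemma pbase_ex {k : ℕ} (X : S.MMorObj k)
    (hproj : ∀ Y : E, ∃ (P : E) (p : P ⟶ Y), S.EProjective P ∧ S.AdmEpi p)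
    (hfrob : ∀ Y : E, S.EProjective Y ↔ S.EInjective Y) :
    ∃ _ : PData S X 0 (Nat.succ_pos k), True := by
  obtain ⟨G₀, π₀, hG₀proj, K₀, κ₀, hses₀⟩ := hproj (X.obj ⟨0, Nat.succ_pos k⟩)
  exact ⟨⟨G₀, K₀, π₀, κ₀, hses₀, hG₀proj, (hfrob G₀).mp hG₀proj⟩, trivial⟩

lemma pstep_ex [HasBinaryBiproducts E] {k : ℕ} (X : S.MMorObj k)
    (hproj : ∀ Y : E, ∃ (P : E) (p : P ⟶ Y), S.EProjective P ∧ S.AdmEpi p)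
    (hfrob : ∀ Y : E, S.EProjective Y ↔ S.EInjective Y)
    (n : ℕ) (hn : n + 1 < k + 1) (prev : PData S X n (Nat.lt_of_succ_lt hn)) :
    ∃ _ : PStep S X n hn prev, True := by
  have hnk : n < k := Nat.lt_of_succ_lt_succ hn
  let xm : X.obj ⟨n, Nat.lt_of_succ_lt hn⟩ ⟶ X.obj ⟨n+1, hn⟩ := X.map ⟨n, hnk⟩
  obtain ⟨G, π, hGproj, hGadm⟩ := hproj (X.obj ⟨n+1, hn⟩)
  set ρn : prev.M ⊞ G ⟶ X.obj ⟨n+1, hn⟩ := biprod.desc (prev.ρ ≫ xm) π with hρn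
  have hρnAdm : S.AdmEpi ρn := admEpi_desc _ hGadm
  obtain ⟨Kn, κn, hsesn⟩ := hρnAdm
  -- iterated pullbacks computing the kernel of `ρn`
  obtain ⟨PB₂, g₂, t₂, hpb₂, W₂, f₂, hsesg₂⟩ := S.epi_pullback π xm hGadm
  -- hpb₂ : IsPullback g₂ t₂ xm π
  obtain ⟨PB, g₃, t₃, hpb₃, W₃, f₃, hsesg₃⟩ := S.epi_pullback prev.ρ g₂ ⟨_, _, prev.hses⟩
  -- hpb₃ : IsPullback g₃ t₃ g₂ prev.ρ
  set χ : PB ⟶ prev.M ⊞ G := biprod.lift t₃ (-(g₃ ≫ t₂)) with hχ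
  have e1 : t₃ ≫ prev.ρ ≫ xm = g₃ ≫ t₂ ≫ π := by
    rw [← Category.assoc, ← hpb₃.w, Category.assoc, hpb₂.w]
  have hχ0 : χ ≫ ρn = 0 := by
    rw [hχ, hρn, biprod.lift_desc, Preadditive.neg_comp, Category.assoc g₃ t₂ π, e1,
      add_neg_cancel]
  -- `χ` is a kernel of `ρn`
  have hlift : ∀ {T : E} (τ : T ⟶ prev.M ⊞ G), τ ≫ ρn = 0 → ∃ l : T ⟶ PB, l ≫ χ = τ := by
    intro T τ eq
    have hτ0 : (τ ≫ biprod.fst) ≫ prev.ρ ≫ xm + (τ ≫ biprod.snd) ≫ π = 0 := by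
      have h1 : τ ≫ biprod.fst ≫ biprod.inl + τ ≫ biprod.snd ≫ biprod.inr = τ := by
        rw [← Preadditive.comp_add, biprod.total, Category.comp_id]
      calc (τ ≫ biprod.fst) ≫ prev.ρ ≫ xm + (τ ≫ biprod.snd) ≫ π
          = (τ ≫ biprod.fst ≫ biprod.inl + τ ≫ biprod.snd ≫ biprod.inr) ≫ ρn := by
            rw [Preadditive.add_comp, hρn]
            simp only [Category.assoc, biprod.inl_desc, biprod.inr_desc]
        _ = 0 := by rw [h1, eq]
    have w₂ : ((τ ≫ biprod.fst) ≫ prev.ρ) ≫ xm = (-(τ ≫ biprod.snd)) ≫ π := by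
      rw [Preadditive.neg_comp, Category.assoc]
      exact eq_neg_of_add_eq_zero_left hτ0
    obtain ⟨l₂, hl₂f, hl₂s⟩ : ∃ l₂ : T ⟶ PB₂, l₂ ≫ g₂ = (τ ≫ biprod.fst) ≫ prev.ρ ∧
        l₂ ≫ t₂ = -(τ ≫ biprod.snd) :=
      ⟨hpb₂.lift _ _ w₂, hpb₂.lift_fst _ _ _, hpb₂.lift_snd _ _ _⟩
    obtain ⟨l₃, hl₃f, hl₃s⟩ : ∃ l₃ : T ⟶ PB, l₃ ≫ g₃ = l₂ ∧ l₃ ≫ t₃ = τ ≫ biprod.fst :=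
      ⟨hpb₃.lift _ _ hl₂f, hpb₃.lift_fst _ _ _, hpb₃.lift_snd _ _ _⟩
    refine ⟨l₃, ?_⟩
    rw [hχ]
    apply biprod.hom_ext
    · rw [Category.assoc, biprod.lift_fst, hl₃s]
    · rw [Category.assoc, biprod.lift_snd, Preadditive.comp_neg, ← Category.assoc, hl₃f, hl₂s,
        neg_neg]
  have hχmono : ∀ {T : E} (a b : T ⟶ PB), a ≫ χ = b ≫ χ → a = b := by
    intro T a b hab
    have habf : a ≫ t₃ = b ≫ t₃ := by
      have := congrArg (· ≫ biprod.fst) hab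
      simpa [hχ, Category.assoc] using this
    have habs : a ≫ g₃ ≫ t₂ = b ≫ g₃ ≫ t₂ := by
      have := congrArg (· ≫ biprod.snd) hab
      simp only [hχ, Category.assoc, biprod.lift_snd, Preadditive.comp_neg, neg_inj] at this
      simpa [Category.assoc] using this
    refine hpb₃.hom_ext (hpb₂.hom_ext ?_ ?_) habf
    · rw [Category.assoc, Category.assoc, hpb₃.w, ← Category.assoc, ← Category.assoc, habf]
    · rw [Category.assoc, Category.assoc]
      exact habs
  have hχlim : IsLimit (KernelFork.ofι χ hχ0) := by
    refine KernelFork.IsLimit.ofι _ _ (fun τ eq => (hlift τ eq).choose)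
      (fun τ eq => (hlift τ eq).choose_spec) (fun τ eq m hm => ?_)
    have hm' : m ≫ χ = τ := by simpa using hm
    exact hχmono _ _ (by rw [hm', (hlift τ eq).choose_spec])
  obtain ⟨hκnlim⟩ := S.isKernel hsesn
  have hε : (hκnlim.conePointUniqueUpToIso hχlim).hom ≫ χ = κn := by
    simpa using hκnlim.conePointUniqueUpToIso_hom_comp hχlim WalkingParallelPair.zero
  obtain ⟨t₀, ht₀g, ht₀t⟩ : ∃ t₀ : prev.K ⟶ PB, t₀ ≫ g₃ = 0 ∧ t₀ ≫ t₃ = prev.κ :=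
    ⟨hpb₃.lift 0 prev.κ (by rw [Limits.zero_comp, S.comp_zero prev.hses]),
      hpb₃.lift_fst _ _ _, hpb₃.lift_snd _ _ _⟩
  have hst₀ : S.ses t₀ g₃ := ses_kernel_lift_of_isPullback hpb₃ hsesg₃ prev.hses ht₀t ht₀g
  set klink : prev.K ⟶ Kn := t₀ ≫ (hκnlim.conePointUniqueUpToIso hχlim).inv with hklinkdef
  have hklinkAdm : S.AdmMono klink := by
    refine ⟨PB₂, (hκnlim.conePointUniqueUpToIso hχlim).hom ≫ g₃, S.iso_closed (Iso.refl _)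
      (hκnlim.conePointUniqueUpToIso hχlim).symm (Iso.refl _) ?_ ?_ hst₀⟩
    · rw [Iso.refl_hom, Category.id_comp, Iso.symm_hom, hklinkdef]
    · rw [Iso.refl_hom, Category.comp_id, Iso.symm_hom, ← Category.assoc, Iso.inv_hom_id,
        Category.id_comp]
  have ht₀χ : t₀ ≫ χ = prev.κ ≫ biprod.inl := by
    rw [hχ]
    apply biprod.hom_ext
    · rw [Category.assoc, biprod.lift_fst, ht₀t, Category.assoc, biprod.inl_fst,
        Category.comp_id]
    · rw [Category.assoc, biprod.lift_snd, Preadditive.comp_neg, ← Category.assoc, ht₀g,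
        Limits.zero_comp, neg_zero, Category.assoc, biprod.inl_snd, Limits.comp_zero]
  have h7 : (hκnlim.conePointUniqueUpToIso hχlim).inv ≫ κn = χ := by
    rw [Iso.inv_comp_eq]
    exact hε.symm
  have hκsquare : klink ≫ κn = prev.κ ≫ biprod.inl := by
    rw [hklinkdef, Category.assoc, h7, ht₀χ]
  exact ⟨⟨⟨prev.M ⊞ G, Kn, ρn, κn, hsesn, eprojective_biprod prev.hMproj hGproj,
    einjective_biprod prev.hMinj ((hfrob G).mp hGproj)⟩,
    biprod.inl, klink, S.admMono_inl _ _, ⟨biprod.fst, biprod.inl_fst⟩, hklinkAdm, hκsquare,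
    biprod.inl_desc _ _⟩, trivial⟩

section PChain

variable [HasBinaryBiproducts E] {k : ℕ} (X : S.MMorObj k)
  (hproj : ∀ Y : E, ∃ (P : E) (p : P ⟶ Y), S.EProjective P ∧ S.AdmEpi p)
  (hfrob : ∀ Y : E, S.EProjective Y ↔ S.EInjective Y)

noncomputable def pchain : ∀ (n : ℕ) (hn : n < k + 1), PData S X n hn :=
  Nat.rec (motive := fun n => ∀ hn : n < k + 1, PData S X n hn)
    (fun _ => (pbase_ex X hproj hfrob).choose)
    (fun n ih hn => (pstep_ex X hproj hfrob n hn (ih (Nat.lt_of_succ_lt hn))).choose.next)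

noncomputable def pstepD (n : ℕ) (hn : n + 1 < k + 1) :
    PStep S X n hn (pchain X hproj hfrob n (Nat.lt_of_succ_lt hn)) :=
  (pstep_ex X hproj hfrob n hn (pchain X hproj hfrob n (Nat.lt_of_succ_lt hn))).choose

include hproj hfrob in
lemma mmor_enough_projectives_aux :
    ∃ (P : S.MMorObj k) (p : S.MMorHom P X),
      MMorAdmEpi p ∧ MMorProjective P ∧ MMorInjective P := by
  refine ⟨⟨fun i => (pchain X hproj hfrob i.val i.isLt).M,
      fun j => (pstepD X hproj hfrob j.val (Nat.succ_lt_succ j.isLt)).link,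
      fun j => (pstepD X hproj hfrob j.val (Nat.succ_lt_succ j.isLt)).hlink⟩,
    ⟨fun i => (pchain X hproj hfrob i.val i.isLt).ρ,
      fun j => (pstepD X hproj hfrob j.val (Nat.succ_lt_succ j.isLt)).hρ⟩,
    ⟨⟨fun i => (pchain X hproj hfrob i.val i.isLt).K,
        fun j => (pstepD X hproj hfrob j.val (Nat.succ_lt_succ j.isLt)).klink,
        fun j => (pstepD X hproj hfrob j.val (Nat.succ_lt_succ j.isLt)).hklink⟩,
      ⟨fun i => (pchain X hproj hfrob i.val i.isLt).κ,
        fun j => (pstepD X hproj hfrob j.val (Nat.succ_lt_succ j.isLt)).hκ⟩,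
      fun i => (pchain X hproj hfrob i.val i.isLt).hses⟩,
    mmorProjective_of_split (fun i => (pchain X hproj hfrob i.val i.isLt).hMproj)
      (fun j => (pstepD X hproj hfrob j.val (Nat.succ_lt_succ j.isLt)).hsplit),
    mmorInjective_of_split (fun i => (pchain X hproj hfrob i.val i.isLt).hMinj)
      (fun j => (pstepD X hproj hfrob j.val (Nat.succ_lt_succ j.isLt)).hsplit)⟩

end PChain

end ExactStructure

namespace ExactStructure

variable {E : Type u} [Category.{v} E] [Preadditive E] [HasZeroObject E]
variable {S : ExactStructure E}

/-- Composition of morphisms in `MMor_k(E)`. -/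
def MMorHom.comp {k : ℕ} {X Y Z : S.MMorObj k} (f : S.MMorHom X Y) (g : S.MMorHom Y Z) :
    S.MMorHom X Z where
  app i := f.app i ≫ g.app i
  comm j := by
    rw [← Category.assoc, f.comm j, Category.assoc, g.comm j, ← Category.assoc]

/-- The identity morphism in `MMor_k(E)`. -/
def MMorHom.id {k : ℕ} (X : S.MMorObj k) : S.MMorHom X X :=
  ⟨fun _ => 𝟙 _, fun j => by rw [Category.comp_id, Category.id_comp]⟩

lemma mmorInjective_retract {k : ℕ} {X J : S.MMorObj k} (hJ : MMorInjective J)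
    (σ : S.MMorHom X J) (ρ : S.MMorHom J X) (h : ∀ i, σ.app i ≫ ρ.app i = 𝟙 (X.obj i)) :
    MMorInjective X := by
  intro A B f hf u
  obtain ⟨w, hw⟩ := hJ f hf (u.comp σ)
  refine ⟨w.comp ρ, fun i => ?_⟩
  show f.app i ≫ (w.app i ≫ ρ.app i) = u.app i
  rw [← Category.assoc, hw i]
  show (u.app i ≫ σ.app i) ≫ ρ.app i = u.app i
  rw [Category.assoc, h i, Category.comp_id]

lemma mmorProjective_retract {k : ℕ} {X P : S.MMorObj k} (hP : MMorProjective P)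
    (σ : S.MMorHom X P) (ρ : S.MMorHom P X) (h : ∀ i, σ.app i ≫ ρ.app i = 𝟙 (X.obj i)) :
    MMorProjective X := by
  intro Y Z g hg u
  obtain ⟨w, hw⟩ := hP g hg (ρ.comp u)
  refine ⟨σ.comp w, fun i => ?_⟩
  show (σ.app i ≫ w.app i) ≫ g.app i = u.app i
  rw [Category.assoc, hw i]
  show σ.app i ≫ ρ.app i ≫ u.app i = u.app i
  rw [← Category.assoc, h i, Category.id_comp]

end ExactStructure


/-- If `E` is a Frobenius exact category (enough projectives, enough
injectives, and projectives = injectives), then the monomorphism category `MMor_k(E)` is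
again Frobenius exact. -/
theorem mmor_frobenius
    {E : Type u} [Category.{v} E] [Preadditive E] [HasZeroObject E]
    (S : ExactStructure E) (k : ℕ)
    (hproj : ∀ X : E, ∃ (P : E) (p : P ⟶ X), S.EProjective P ∧ S.AdmEpi p)
    (hinj : ∀ X : E, ∃ (I : E) (ι : X ⟶ I), S.EInjective I ∧ S.AdmMono ι)
    (hfrob : ∀ X : E, S.EProjective X ↔ S.EInjective X) :
    (∀ X : S.MMorObj k, ∃ (P : S.MMorObj k) (p : S.MMorHom P X),
        ExactStructure.MMorProjective P ∧ ExactStructure.MMorAdmEpi p) ∧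
    (∀ X : S.MMorObj k, ∃ (I : S.MMorObj k) (ι : S.MMorHom X I),
        ExactStructure.MMorInjective I ∧ ExactStructure.MMorAdmMono ι) ∧
    (∀ X : S.MMorObj k,
        ExactStructure.MMorProjective X ↔ ExactStructure.MMorInjective X) := by
  
  haveI := S.hasBinaryBiproducts
  refine ⟨?_, ?_, ?_⟩
  · intro X
    obtain ⟨P, p, hadm, hP, hPinj⟩ := ExactStructure.mmor_enough_projectives_aux X hproj hfrob
    exact ⟨P, p, hP, hadm⟩
  · intro X
    obtain ⟨J, ι, hadm, hJ, hJproj⟩ := ExactStructure.mmor_enough_injectives_aux X hinj hfrob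
    exact ⟨J, ι, hJ, hadm⟩
  · intro X
    constructor
    · intro hX
      obtain ⟨P, p, hadm, hP, hPinj⟩ := ExactStructure.mmor_enough_projectives_aux X hproj hfrob
      obtain ⟨v, hv⟩ := hX p hadm (ExactStructure.MMorHom.id X)
      exact ExactStructure.mmorInjective_retract hPinj v p hv
    · intro hX
      obtain ⟨J, ι, hadm, hJ, hJproj⟩ := ExactStructure.mmor_enough_injectives_aux X hinj hfrob
      obtain ⟨v, hv⟩ := hX ι hadm (ExactStructure.MMorHom.id X)
      exact ExactStructure.mmorProjective_retract hJproj ι v hv
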